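/- Let 0 ≤ ξ < 1 and let η equal either 0 or √ξ. Define, for x > 1, I(x) := −2η/(x + η) + 1/(x − 1) + ξ/(x − ξ), H(x) := 2η²/(x + η)² + 1/(x − 1)² + ξ²/(x − ξ)², and G(x) := I(x)(1 − I(x)) − H(x) (equivalently G = x·I' + I(2 − I)). Then G has exactly one zero x_ISCO in (1, ∞); this zero satisfies x_ISCO ≥ 3; G(x) < 0 for 1 < x < x_ISCO and G(x) > 0 for x > x_ISCO; and G has strictly positive derivative at x_ISCO. In particular, the Reissner–Nordström and loop quantum corrected black hole metrics satisfy the single-MSCO condition (iv), with a unique ISCO located at x_ISCO ≥ 3 (i.e. r_ISCO ≥ 3 r_h). -/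

import Mathlib

set_option maxRecDepth 100000

open Real Filter Set Topology

/-- Core lemma: if `F = x^2 * G` has positive derivative `φ` on `(1,∞)`,
`G 2 < 0`, `G 3 ≤ 0` and `G b > 0` for some `b > 3`, then `G` has a unique zero in
`(1,∞)`, located in `[3,∞)`, with sign change and positive derivative there. -/
lemma stmt18core (G φ : ℝ → ℝ)
    (hd : ∀ x, 1 < x → HasDerivAt (fun y => y ^ 2 * G y) (φ x) x)
    (hφ : ∀ x, 1 < x → 0 < φ x)
    (h2 : G 2 < 0) (h3 : G 3 ≤ 0)
    (b : ℝ) (hb3 : 3 < b) (hbpos : 0 < G b) :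
    ∃ x_ISCO : ℝ, 1 < x_ISCO ∧ G x_ISCO = 0 ∧
      (∀ x, 1 < x → G x = 0 → x = x_ISCO) ∧
      3 ≤ x_ISCO ∧
      (∀ x, 1 < x → x < x_ISCO → G x < 0) ∧
      (∀ x, x_ISCO < x → 0 < G x) ∧
      0 < deriv G x_ISCO := by
  set F : ℝ → ℝ := fun y => y ^ 2 * G y with hFdef
  have hcont : ContinuousOn F (Set.Ioi (1:ℝ)) := fun x hx =>
    ((hd x hx).continuousAt).continuousWithinAt
  have hmono : StrictMonoOn F (Set.Ioi (1:ℝ)) := by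
    apply strictMonoOn_of_deriv_pos (convex_Ioi 1) hcont
    intro x hx
    rw [interior_Ioi] at hx
    rw [(hd x hx).deriv]
    exact hφ x hx
  have hF2 : F 2 < 0 := by
    have : (2:ℝ) ^ 2 * G 2 < 0 := by nlinarith [h2]
    simpa [hFdef] using this
  have hFb : 0 < F b := by
    have hb2 : (0:ℝ) < b ^ 2 := by nlinarith
    have : 0 < b ^ 2 * G b := mul_pos hb2 hbpos
    simpa [hFdef] using this
  have hsub : Set.Icc (2:ℝ) b ⊆ Set.Ioi (1:ℝ) := fun y hy => lt_of_lt_of_le (by norm_num) hy.1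
  have hcont2 : ContinuousOn F (Set.Icc 2 b) := hcont.mono hsub
  have hmem : (0:ℝ) ∈ Set.Icc (F 2) (F b) := ⟨le_of_lt hF2, le_of_lt hFb⟩
  obtain ⟨x₀, hx₀mem, hFx₀⟩ := intermediate_value_Icc (by linarith) hcont2 hmem
  have hx₀1 : 1 < x₀ := lt_of_lt_of_le (by norm_num) hx₀mem.1
  have hx₀pos : 0 < x₀ := by linarith
  have hGx₀ : G x₀ = 0 := by
    have h := hFx₀
    simp only [hFdef] at h
    have hne : x₀ ^ 2 ≠ 0 := by positivity
    rcases mul_eq_zero.1 h with h' | h'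
    · exact absurd h' hne
    · exact h'
  have hx₀3 : 3 ≤ x₀ := by
    by_contra hlt
    push_neg at hlt
    have h13 : (3:ℝ) ∈ Set.Ioi (1:ℝ) := by norm_num
    have := hmono (Set.mem_Ioi.2 hx₀1) h13 hlt
    rw [hFx₀] at this
    have hF3 : F 3 ≤ 0 := by
      have : (3:ℝ) ^ 2 * G 3 ≤ 0 := by nlinarith [h3]
      simpa [hFdef] using this
    linarith
  have hneg : ∀ x, 1 < x → x < x₀ → G x < 0 := by
    intro x hx1 hxlt
    have := hmono (Set.mem_Ioi.2 hx1) (Set.mem_Ioi.2 hx₀1) hxlt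
    rw [hFx₀] at this
    simp only [hFdef] at this
    nlinarith [this, hx1]
  have hpos : ∀ x, x₀ < x → 0 < G x := by
    intro x hxgt
    have hx1 : 1 < x := by linarith
    have := hmono (Set.mem_Ioi.2 hx₀1) (Set.mem_Ioi.2 hx1) hxgt
    rw [hFx₀] at this
    simp only [hFdef] at this
    nlinarith [this, hx1]
  have huniq : ∀ x, 1 < x → G x = 0 → x = x₀ := by
    intro x hx1 hGx
    have hFx : F x = 0 := by simp [hFdef, hGx]
    exact hmono.injOn (Set.mem_Ioi.2 hx1) (Set.mem_Ioi.2 hx₀1) (by rw [hFx, hFx₀])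
  have hFd : HasDerivAt F (φ x₀) x₀ := hd x₀ hx₀1
  have hx2ne : x₀ ^ 2 ≠ 0 := by positivity
  have hdiv : HasDerivAt (fun x => F x / x ^ 2)
      ((φ x₀ * x₀ ^ 2 - F x₀ * (↑2 * x₀ ^ (2-1))) / (x₀ ^ 2) ^ 2) x₀ :=
    hFd.div (hasDerivAt_pow 2 x₀) hx2ne
  have hev : G =ᶠ[nhds x₀] (fun x => F x / x ^ 2) := by
    filter_upwards [Ioi_mem_nhds hx₀pos] with y hy
    have hyne : (y:ℝ) ^ 2 ≠ 0 := ne_of_gt (pow_pos hy 2)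
    simp only [hFdef]
    have hy0 : y ≠ 0 := ne_of_gt hy
    field_simp
  have hGd : HasDerivAt G ((φ x₀ * x₀ ^ 2 - F x₀ * (↑2 * x₀ ^ (2-1))) / (x₀ ^ 2) ^ 2) x₀ :=
    hdiv.congr_of_eventuallyEq hev
  have hFx₀' : F x₀ = 0 := hFx₀
  have hderiv_pos : 0 < (φ x₀ * x₀ ^ 2 - F x₀ * (↑2 * x₀ ^ (2-1))) / (x₀ ^ 2) ^ 2 := by
    rw [hFx₀']
    have h1 : 0 < φ x₀ := hφ x₀ hx₀1
    have h2' : 0 < (x₀ ^ 2) ^ 2 := by positivity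
    apply div_pos _ h2'
    nlinarith [h1, hx₀pos]
  exact ⟨x₀, hx₀1, hGx₀, huniq, hx₀3, hneg, hpos, by rw [hGd.deriv]; exact hderiv_pos⟩

set_option maxHeartbeats 1000000 in
/-- `G` as an explicit rational function `P/Q`. -/
lemma stmt18PQ (a s x : ℝ) (hA : 0 < x + a) (hB : 0 < x - 1) (hC : 0 < x - s) :
    (-2 * a / (x + a) + 1 / (x - 1) + s / (x - s)) * (1 - (-2 * a / (x + a) + 1 / (x - 1) + s / (x - s))) - (2 * a ^ 2 / (x + a) ^ 2 + 1 / (x - 1) ^ 2 + s ^ 2 / (x - s) ^ 2)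
    = (1 * x ^ 5 + 1 * x ^ 5 * s - 2 * x ^ 5 * a - 3 * x ^ 4 - 6 * x ^ 4 * s - 3 * x ^ 4 * s ^ 2 + 10 * x ^ 4 * a + 10 * x ^ 4 * a * s - 8 * x ^ 4 * a ^ 2 + 9 * x ^ 3 * s + 9 * x ^ 3 * s ^ 2 - 12 * x ^ 3 * a - 36 * x ^ 3 * a * s - 12 * x ^ 3 * a * s ^ 2 + 21 * x ^ 3 * a ^ 2 + 21 * x ^ 3 * a ^ 2 * s - 8 * x ^ 2 * s ^ 2 + 34 * x ^ 2 * a * s + 34 * x ^ 2 * a * s ^ 2 - 15 * x ^ 2 * a ^ 2 - 54 * x ^ 2 * a ^ 2 * s - 15 * x ^ 2 * a ^ 2 * s ^ 2 - 26 * x * a * s ^ 2 + 37 * x * a ^ 2 * s + 37 * x * a ^ 2 * s ^ 2 - 24 * a ^ 2 * s ^ 2) / ((x + a) * (x - 1) * (x - s)) ^ 2 := by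
  have hAne : x + a ≠ 0 := ne_of_gt hA
  have hBne : x - 1 ≠ 0 := ne_of_gt hB
  have hCne : x - s ≠ 0 := ne_of_gt hC
  field_simp
  ring

set_option maxHeartbeats 2000000 in
/-- Derivative of `x^2 * G` as an explicit rational function. -/
lemma stmt18deriv (a s x : ℝ) (ha : 0 ≤ a) (hs : s < 1) (hx : 1 < x) :
    HasDerivAt (fun y : ℝ => y ^ 2 * ((-2 * a / (y + a) + 1 / (y - 1) + s / (y - s)) * (1 - (-2 * a / (y + a) + 1 / (y - 1) + s / (y - s))) - (2 * a ^ 2 / (y + a) ^ 2 + 1 / (y - 1) ^ 2 + s ^ 2 / (y - s) ^ 2)))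
      ((1 * x ^ 12 + 1 * x ^ 12 * s - 2 * x ^ 12 * a - 4 * x ^ 11 - 8 * x ^ 11 * s - 4 * x ^ 11 * s ^ 2 + 12 * x ^ 11 * a + 12 * x ^ 11 * a * s - 8 * x ^ 11 * a ^ 2 + 9 * x ^ 10 + 24 * x ^ 10 * s + 24 * x ^ 10 * s ^ 2 + 9 * x ^ 10 * s ^ 3 - 32 * x ^ 10 * a - 64 * x ^ 10 * a * s - 32 * x ^ 10 * a * s ^ 2 + 42 * x ^ 10 * a ^ 2 + 42 * x ^ 10 * a ^ 2 * s - 22 * x ^ 10 * a ^ 3 - 6 * x ^ 9 - 44 * x ^ 9 * s - 60 * x ^ 9 * s ^ 2 - 44 * x ^ 9 * s ^ 3 - 6 * x ^ 9 * s ^ 4 + 52 * x ^ 9 * a + 160 * x ^ 9 * a * s + 160 * x ^ 9 * a * s ^ 2 + 52 * x ^ 9 * a * s ^ 3 - 96 * x ^ 9 * a ^ 2 - 208 * x ^ 9 * a ^ 2 * s - 96 * x ^ 9 * a ^ 2 * s ^ 2 + 100 * x ^ 9 * a ^ 3 + 100 * x ^ 9 * a ^ 3 * s - 16 * x ^ 9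 * a ^ 4 + 27 * x ^ 8 * s + 88 * x ^ 8 * s ^ 2 + 88 * x ^ 8 * s ^ 3 + 27 * x ^ 8 * s ^ 4 - 30 * x ^ 8 * a - 240 * x ^ 8 * a * s - 360 * x ^ 8 * a * s ^ 2 - 240 * x ^ 8 * a * s ^ 3 - 30 * x ^ 8 * a * s ^ 4 + 122 * x ^ 8 * a ^ 2 + 456 * x ^ 8 * a ^ 2 * s + 456 * x ^ 8 * a ^ 2 * s ^ 2 + 122 * x ^ 8 * a ^ 2 * s ^ 3 - 184 * x ^ 8 * a ^ 3 - 448 * x ^ 8 * a ^ 3 * s - 184 * x ^ 8 * a ^ 3 * s ^ 2 + 69 * x ^ 8 * a ^ 4 + 69 * x ^ 8 * a ^ 4 * s - 48 * x ^ 7 * s ^ 2 - 96 * x ^ 7 * s ^ 3 - 48 * x ^ 7 * s ^ 4 + 132 * x ^ 7 * a * s + 464 * x ^ 7 * a * s ^ 2 + 464 * x ^ 7 * a * s ^ 3 + 132 * x ^ 7 * a * s ^ 4 - 60 * x ^ 7 * a ^ 2 - 552 * x ^ 7 * a ^ 2 * s - 936 * x ^ 7 * a ^ 2 * s ^ 2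 - 552 * x ^ 7 * a ^ 2 * s ^ 3 - 60 * x ^ 7 * a ^ 2 * s ^ 4 + 172 * x ^ 7 * a ^ 3 + 816 * x ^ 7 * a ^ 3 * s + 816 * x ^ 7 * a ^ 3 * s ^ 2 + 172 * x ^ 7 * a ^ 3 * s ^ 3 - 116 * x ^ 7 * a ^ 4 - 296 * x ^ 7 * a ^ 4 * s - 116 * x ^ 7 * a ^ 4 * s ^ 2 + 43 * x ^ 6 * s ^ 3 + 43 * x ^ 6 * s ^ 4 - 232 * x ^ 6 * a * s ^ 2 - 480 * x ^ 6 * a * s ^ 3 - 232 * x ^ 6 * a * s ^ 4 + 262 * x ^ 6 * a ^ 2 * s + 1032 * x ^ 6 * a ^ 2 * s ^ 2 + 1032 * x ^ 6 * a ^ 2 * s ^ 3 + 262 * x ^ 6 * a ^ 2 * s ^ 4 - 66 * x ^ 6 * a ^ 3 - 752 * x ^ 6 * a ^ 3 * s - 1464 * x ^ 6 * a ^ 3 * s ^ 2 - 752 * x ^ 6 * a ^ 3 * s ^ 3 - 66 * x ^ 6 * a ^ 3 * s ^ 4 + 93 * x ^ 6 * a ^ 4 + 496 * x ^ 6 * a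 ^ 4 * s + 496 * x ^ 6 * a ^ 4 * s ^ 2 + 93 * x ^ 6 * a ^ 4 * s ^ 3 - 16 * x ^ 5 * s ^ 4 + 204 * x ^ 5 * a * s ^ 3 + 204 * x ^ 5 * a * s ^ 4 - 456 * x ^ 5 * a ^ 2 * s ^ 2 - 992 * x ^ 5 * a ^ 2 * s ^ 3 - 456 * x ^ 5 * a ^ 2 * s ^ 4 + 284 * x ^ 5 * a ^ 3 * s + 1312 * x ^ 5 * a ^ 3 * s ^ 2 + 1312 * x ^ 5 * a ^ 3 * s ^ 3 + 284 * x ^ 5 * a ^ 3 * s ^ 4 - 30 * x ^ 5 * a ^ 4 - 396 * x ^ 5 * a ^ 4 * s - 828 * x ^ 5 * a ^ 4 * s ^ 2 - 396 * x ^ 5 * a ^ 4 * s ^ 3 - 30 * x ^ 5 * a ^ 4 * s ^ 4 - 74 * x ^ 4 * a * s ^ 4 + 390 * x ^ 4 * a ^ 2 * s ^ 3 + 390 * x ^ 4 * a ^ 2 * s ^ 4 - 480 * x ^ 4 * a ^ 3 * s ^ 2 - 1120 * x ^ 4 * a ^ 3 * s ^ 3 - 480 * x ^ 4 * a ^ 3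 * s ^ 4 + 127 * x ^ 4 * a ^ 4 * s + 656 * x ^ 4 * a ^ 4 * s ^ 2 + 656 * x ^ 4 * a ^ 4 * s ^ 3 + 127 * x ^ 4 * a ^ 4 * s ^ 4 - 136 * x ^ 3 * a ^ 2 * s ^ 4 + 388 * x ^ 3 * a ^ 3 * s ^ 3 + 388 * x ^ 3 * a ^ 3 * s ^ 4 - 208 * x ^ 3 * a ^ 4 * s ^ 2 - 512 * x ^ 3 * a ^ 4 * s ^ 3 - 208 * x ^ 3 * a ^ 4 * s ^ 4 - 126 * x ^ 2 * a ^ 3 * s ^ 4 + 159 * x ^ 2 * a ^ 4 * s ^ 3 + 159 * x ^ 2 * a ^ 4 * s ^ 4 - 48 * x * a ^ 4 * s ^ 4) / (((x + a) * (x - 1) * (x - s)) ^ 2) ^ 2) x := by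
  have hA : 0 < x + a := by linarith
  have hB : 0 < x - 1 := by linarith
  have hC : 0 < x - s := by linarith
  have hABC : 0 < (x + a) * (x - 1) * (x - s) := mul_pos (mul_pos hA hB) hC
  have hQne : ((x + a) * (x - 1) * (x - s)) ^ 2 ≠ 0 := ne_of_gt (pow_pos hABC 2)
  have dnum2 : HasDerivAt (fun y : ℝ => (-24 * a ^ 2 * s ^ 2) * y ^ 2) ((-24 * a ^ 2 * s ^ 2) * (↑2 * x ^ (2 - 1))) x := (hasDerivAt_pow 2 x).const_mul _
  have dnum3 : HasDerivAt (fun y : ℝ => (-26 * a * s ^ 2 + 37 * a ^ 2 * s + 37 * a ^ 2 * s ^ 2) * y ^ 3) ((-26 * a * s ^ 2 + 37 * a ^ 2 * s + 37 * a ^ 2 * s ^ 2) * (↑3 * x ^ (3 - 1))) x := (hasDerivAt_pow 3 x).const_mul _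
  have dnum4 : HasDerivAt (fun y : ℝ => (-8 * s ^ 2 + 34 * a * s + 34 * a * s ^ 2 - 15 * a ^ 2 - 54 * a ^ 2 * s - 15 * a ^ 2 * s ^ 2) * y ^ 4) ((-8 * s ^ 2 + 34 * a * s + 34 * a * s ^ 2 - 15 * a ^ 2 - 54 * a ^ 2 * s - 15 * a ^ 2 * s ^ 2) * (↑4 * x ^ (4 - 1))) x := (hasDerivAt_pow 4 x).const_mul _
  have dnum5 : HasDerivAt (fun y : ℝ => (9 * s + 9 * s ^ 2 - 12 * a - 36 * a * s - 12 * a * s ^ 2 + 21 * a ^ 2 + 21 * a ^ 2 * s) * y ^ 5) ((9 * s + 9 * s ^ 2 - 12 * a - 36 * a * s - 12 * a * s ^ 2 + 21 * a ^ 2 + 21 * a ^ 2 * s) * (↑5 * x ^ (5 - 1))) x := (hasDerivAt_pow 5 x).const_mul _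
  have dnum6 : HasDerivAt (fun y : ℝ => (-3 - 6 * s - 3 * s ^ 2 + 10 * a + 10 * a * s - 8 * a ^ 2) * y ^ 6) ((-3 - 6 * s - 3 * s ^ 2 + 10 * a + 10 * a * s - 8 * a ^ 2) * (↑6 * x ^ (6 - 1))) x := (hasDerivAt_pow 6 x).const_mul _
  have dnum7 : HasDerivAt (fun y : ℝ => (1 + 1 * s - 2 * a) * y ^ 7) ((1 + 1 * s - 2 * a) * (↑7 * x ^ (7 - 1))) x := (hasDerivAt_pow 7 x).const_mul _
  have dnum : HasDerivAt (fun y : ℝ => (-24 * a ^ 2 * s ^ 2) * y ^ 2 + (-26 * a * s ^ 2 + 37 * a ^ 2 * s + 37 * a ^ 2 * s ^ 2) * y ^ 3 + (-8 * s ^ 2 + 34 * a * s + 34 * a * s ^ 2 - 15 * a ^ 2 - 54 * a ^ 2 * s - 15 * a ^ 2 * s ^ 2) * y ^ 4 + (9 * s + 9 * s ^ 2 - 12 * a - 36 * a * s - 12 * a * s ^ 2 + 21 * a ^ 2 + 21 * a ^ 2 * s) * y ^ 5 + (-3 - 6 * s - 3 * s ^ 2 + 10 * a + 10 * a * s - 8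 * a ^ 2) * y ^ 6 + (1 + 1 * s - 2 * a) * y ^ 7) _ x := (((((dnum2.add dnum3).add dnum4).add dnum5).add dnum6).add dnum7)
  have dden : HasDerivAt (fun y : ℝ => ((y + a) * (y - 1) * (y - s)) ^ 2) _ x :=
    ((((hasDerivAt_id x).add_const a).mul ((hasDerivAt_id x).sub_const 1)).mul
      ((hasDerivAt_id x).sub_const s)).pow 2
  have ddiv := dnum.div dden hQne
  have hev : (fun y : ℝ => y ^ 2 * ((-2 * a / (y + a) + 1 / (y - 1) + s / (y - s)) * (1 - (-2 * a / (y + a) + 1 / (y - 1) + s / (y - s))) - (2 * a ^ 2 / (y + a) ^ 2 + 1 / (y - 1) ^ 2 + s ^ 2 / (y - s) ^ 2)))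
      =ᶠ[nhds x] (fun y : ℝ => ((-24 * a ^ 2 * s ^ 2) * y ^ 2 + (-26 * a * s ^ 2 + 37 * a ^ 2 * s + 37 * a ^ 2 * s ^ 2) * y ^ 3 + (-8 * s ^ 2 + 34 * a * s + 34 * a * s ^ 2 - 15 * a ^ 2 - 54 * a ^ 2 * s - 15 * a ^ 2 * s ^ 2) * y ^ 4 + (9 * s + 9 * s ^ 2 - 12 * a - 36 * a * s - 12 * a * s ^ 2 + 21 * a ^ 2 + 21 * a ^ 2 * s) * y ^ 5 + (-3 - 6 * s - 3 * s ^ 2 + 10 * a + 10 * a * s - 8 * a ^ 2) * y ^ 6 + (1 + 1 * s - 2 * a) * y ^ 7) / ((y + a) * (y - 1) * (y - s)) ^ 2) := by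
    filter_upwards [Ioi_mem_nhds hx] with y hy
    have hAy : 0 < y + a := by simp only [Set.mem_Ioi] at hy; linarith
    have hBy : 0 < y - 1 := by simp only [Set.mem_Ioi] at hy; linarith
    have hCy : 0 < y - s := by simp only [Set.mem_Ioi] at hy; linarith
    rw [stmt18PQ a s y hAy hBy hCy]
    have hQyne : ((y + a) * (y - 1) * (y - s)) ^ 2 ≠ 0 :=
      ne_of_gt (pow_pos (mul_pos (mul_pos hAy hBy) hCy) 2)
    field_simp
    ring
  have final := ddiv.congr_of_eventuallyEq hev
  convert final using 1
  case e'_4 => rfl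
  case e'_5 => rfl
  push_cast
  simp only [Pi.mul_apply, id]
  ring

set_option maxHeartbeats 2000000 in
lemma stmt18Wpos_lq (e x : ℝ) (he0 : 0 ≤ e) (he1 : e < 1) (hx : 1 < x) :
    0 < 1 * x ^ 9 - 2 * x ^ 9 * e + 1 * x ^ 9 * e ^ 2 - 3 * x ^ 8 + 9 * x ^ 8 * e - 12 * x ^ 8 * e ^ 2 + 9 * x ^ 8 * e ^ 3 - 3 * x ^ 8 * e ^ 4 + 6 * x ^ 7 - 19 * x ^ 7 * e + 39 * x ^ 7 * e ^ 2 - 52 * x ^ 7 * e ^ 3 + 39 * x ^ 7 * e ^ 4 - 19 * x ^ 7 * e ^ 5 + 6 * x ^ 7 * e ^ 6 + 24 * x ^ 6 * e - 64 * x ^ 6 * e ^ 2 + 125 * x ^ 6 * e ^ 3 - 122 * x ^ 6 * e ^ 4 + 125 * x ^ 6 * e ^ 5 - 64 * x ^ 6 * e ^ 6 + 24 * x ^ 6 * e ^ 7 + 36 * x ^ 5 * e ^ 2 - 144 * x ^ 5 * e ^ 3 + 183 * x ^ 5 * e ^ 4 - 294 * x ^ 5 * e ^ 5 + 183 * x ^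 5 * e ^ 6 - 144 * x ^ 5 * e ^ 7 + 36 * x ^ 5 * e ^ 8 + 30 * x ^ 4 * e ^ 3 - 121 * x ^ 4 * e ^ 4 + 309 * x ^ 4 * e ^ 5 - 244 * x ^ 4 * e ^ 6 + 309 * x ^ 4 * e ^ 7 - 121 * x ^ 4 * e ^ 8 + 30 * x ^ 4 * e ^ 9 - 97 * x ^ 3 * e ^ 5 + 151 * x ^ 3 * e ^ 6 - 300 * x ^ 3 * e ^ 7 + 151 * x ^ 3 * e ^ 8 - 97 * x ^ 3 * e ^ 9 + 111 * x ^ 2 * e ^ 7 - 78 * x ^ 2 * e ^ 8 + 111 * x ^ 2 * e ^ 9 - 48 * x * e ^ 9 := by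
  have hu : (0:ℝ) < 1 - e := by linarith
  have hu0 : (0:ℝ) ≤ 1 - e := le_of_lt hu
  have ht0 : (0:ℝ) ≤ x - 1 := by linarith
  have q0 : (0:ℝ) < 4 * e ^ 6 + 24 * e ^ 5 + 60 * e ^ 4 + 80 * e ^ 3 + 60 * e ^ 2 + 24 * e + 4 := by linarith [pow_nonneg he0 1, pow_nonneg he0 2, pow_nonneg he0 3, pow_nonneg he0 4, pow_nonneg he0 5, pow_nonneg he0 6]
  have h0 : (0:ℝ) < (1 - e) ^ 3 * (4 * e ^ 6 + 24 * e ^ 5 + 60 * e ^ 4 + 80 * e ^ 3 + 60 * e ^ 2 + 24 * e + 4) := mul_pos (pow_pos hu 3) q0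
  have q1 : (0:ℝ) ≤ (3 * e ^ 7 - 1 * e ^ 6 - 23 * e ^ 5 + 5 * e ^ 4 + 125 * e ^ 3 + 193 * e ^ 2 + 119 * e + 27) := by linarith [mul_nonneg (pow_nonneg he0 0) (pow_nonneg hu0 7), mul_nonneg (pow_nonneg he0 1) (pow_nonneg hu0 6), mul_nonneg (pow_nonneg he0 2) (pow_nonneg hu0 5), mul_nonneg (pow_nonneg he0 3) (pow_nonneg hu0 4), mul_nonneg (pow_nonneg he0 4) (pow_nonneg hu0 3), mul_nonneg (pow_nonneg he0 5) (pow_nonneg hu0 2), mul_nonneg (pow_nonneg he0 6) (pow_nonneg hu0 1), mul_nonneg (pow_nonneg he0 7) (pow_nonneg hu0 0)]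
  have h1 : (0:ℝ) ≤ (1 - e) ^ 2 * (3 * e ^ 7 - 1 * e ^ 6 - 23 * e ^ 5 + 5 * e ^ 4 + 125 * e ^ 3 + 193 * e ^ 2 + 119 * e + 27) * (x - 1) ^ 1 := mul_nonneg (mul_nonneg (pow_nonneg hu0 2) q1) (pow_nonneg ht0 1)
  have q2 : (0:ℝ) ≤ (-9 * e ^ 7 + 6 * e ^ 6 + 21 * e ^ 5 - 78 * e ^ 4 - 87 * e ^ 3 + 138 * e ^ 2 + 219 * e + 78) := by linarith [mul_nonneg (pow_nonneg he0 0) (pow_nonneg hu0 7), mul_nonneg (pow_nonneg he0 1) (pow_nonneg hu0 6), mul_nonneg (pow_nonneg he0 2) (pow_nonneg hu0 5), mul_nonneg (pow_nonneg he0 3) (pow_nonneg hu0 4), mul_nonneg (pow_nonneg he0 4) (pow_nonneg hu0 3), mul_nonneg (pow_nonneg he0 5) (pow_nonneg hu0 2), mul_nonneg (pow_nonneg he0 6) (pow_nonneg hu0 1), mul_nonneg (pow_nonneg he0 7) (pow_nonneg hu0 0)]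
  have h2 : (0:ℝ) ≤ (1 - e) ^ 1 * (-9 * e ^ 7 + 6 * e ^ 6 + 21 * e ^ 5 - 78 * e ^ 4 - 87 * e ^ 3 + 138 * e ^ 2 + 219 * e + 78) * (x - 1) ^ 2 := mul_nonneg (mul_nonneg (pow_nonneg hu0 1) q2) (pow_nonneg ht0 2)
  have q3 : (0:ℝ) ≤ (23 * e ^ 9 + 27 * e ^ 8 - 24 * e ^ 7 - 65 * e ^ 6 + 34 * e ^ 5 + 103 * e ^ 4 - 136 * e ^ 3 - 143 * e ^ 2 + 151 * e + 126) := by linarith [mul_nonneg (pow_nonneg he0 0) (pow_nonneg hu0 9), mul_nonneg (pow_nonneg he0 1) (pow_nonneg hu0 8), mul_nonneg (pow_nonneg he0 2) (pow_nonneg hu0 7), mul_nonneg (pow_nonneg he0 3) (pow_nonneg hu0 6), mul_nonneg (pow_nonneg he0 4) (pow_nonneg hu0 5), mul_nonneg (pow_nonneg he0 5) (pow_nonneg hu0 4), mul_nonneg (pow_nonneg he0 6) (pow_nonneg hu0 3), mul_nonneg (pow_nonneg he0 7) (pow_nonneg hu0 2), mul_nonneg (pow_nonneg he0 8) (pow_nonneg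 hu0 1), mul_nonneg (pow_nonneg he0 9) (pow_nonneg hu0 0)]
  have h3 : (0:ℝ) ≤ (1 - e) ^ 0 * (23 * e ^ 9 + 27 * e ^ 8 - 24 * e ^ 7 - 65 * e ^ 6 + 34 * e ^ 5 + 103 * e ^ 4 - 136 * e ^ 3 - 143 * e ^ 2 + 151 * e + 126) * (x - 1) ^ 3 := mul_nonneg (mul_nonneg (pow_nonneg hu0 0) q3) (pow_nonneg ht0 3)
  have q4 : (0:ℝ) ≤ (30 * e ^ 9 + 59 * e ^ 8 - 51 * e ^ 7 - 79 * e ^ 6 + 49 * e ^ 5 + 119 * e ^ 4 - 5 * e ^ 3 - 129 * e ^ 2 + 73 * e + 126) := by linarith [mul_nonneg (pow_nonneg he0 0) (pow_nonneg hu0 9), mul_nonneg (pow_nonneg he0 1) (pow_nonneg hu0 8), mul_nonneg (pow_nonneg he0 2) (pow_nonneg hu0 7), mul_nonneg (pow_nonneg he0 3) (pow_nonneg hu0 6), mul_nonneg (pow_nonneg he0 4) (pow_nonneg hu0 5), mul_nonneg (pow_nonneg he0 5) (pow_nonneg hu0 4), mul_nonneg (pow_nonneg he0 6) (pow_nonneg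 hu0 3), mul_nonneg (pow_nonneg he0 7) (pow_nonneg hu0 2), mul_nonneg (pow_nonneg he0 8) (pow_nonneg hu0 1), mul_nonneg (pow_nonneg he0 9) (pow_nonneg hu0 0)]
  have h4 : (0:ℝ) ≤ (1 - e) ^ 0 * (30 * e ^ 9 + 59 * e ^ 8 - 51 * e ^ 7 - 79 * e ^ 6 + 49 * e ^ 5 + 119 * e ^ 4 - 5 * e ^ 3 - 129 * e ^ 2 + 73 * e + 126) * (x - 1) ^ 4 := mul_nonneg (mul_nonneg (pow_nonneg hu0 0) q4) (pow_nonneg ht0 4)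
  have q5 : (0:ℝ) ≤ (36 * e ^ 8 - 75 * e ^ 6 + 57 * e ^ 5 + 102 * e ^ 4 + 18 * e ^ 3 - 75 * e ^ 2 - 3 * e + 84) := by linarith [mul_nonneg (pow_nonneg he0 0) (pow_nonneg hu0 8), mul_nonneg (pow_nonneg he0 1) (pow_nonneg hu0 7), mul_nonneg (pow_nonneg he0 2) (pow_nonneg hu0 6), mul_nonneg (pow_nonneg he0 3) (pow_nonneg hu0 5), mul_nonneg (pow_nonneg he0 4) (pow_nonneg hu0 4), mul_nonneg (pow_nonneg he0 5) (pow_nonneg hu0 3), mul_nonneg (pow_nonneg he0 6) (pow_nonneg hu0 2), mul_nonneg (pow_nonneg he0 7) (pow_nonneg hu0 1), mul_nonneg (pow_nonneg he0 8) (pow_nonneg hu0 0)]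
  have h5 : (0:ℝ) ≤ (1 - e) ^ 0 * (36 * e ^ 8 - 75 * e ^ 6 + 57 * e ^ 5 + 102 * e ^ 4 + 18 * e ^ 3 - 75 * e ^ 2 - 3 * e + 84) * (x - 1) ^ 5 := mul_nonneg (mul_nonneg (pow_nonneg hu0 0) q5) (pow_nonneg ht0 5)
  have q6 : (0:ℝ) ≤ (24 * e ^ 7 - 22 * e ^ 6 - 8 * e ^ 5 + 67 * e ^ 4 + 13 * e ^ 3 - 43 * e ^ 2 - 25 * e + 42) := by linarith [mul_nonneg (pow_nonneg he0 0) (pow_nonneg hu0 7), mul_nonneg (pow_nonneg he0 1) (pow_nonneg hu0 6), mul_nonneg (pow_nonneg he0 2) (pow_nonneg hu0 5), mul_nonneg (pow_nonneg he0 3) (pow_nonneg hu0 4), mul_nonneg (pow_nonneg he0 4) (pow_nonneg hu0 3), mul_nonneg (pow_nonneg he0 5) (pow_nonneg hu0 2), mul_nonneg (pow_nonneg he0 6) (pow_nonneg hu0 1), mul_nonneg (pow_nonneg he0 7) (pow_nonneg hu0 0)]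
  have h6 : (0:ℝ) ≤ (1 - e) ^ 0 * (24 * e ^ 7 - 22 * e ^ 6 - 8 * e ^ 5 + 67 * e ^ 4 + 13 * e ^ 3 - 43 * e ^ 2 - 25 * e + 42) * (x - 1) ^ 6 := mul_nonneg (mul_nonneg (pow_nonneg hu0 0) q6) (pow_nonneg ht0 6)
  have q7 : (0:ℝ) ≤ (6 * e ^ 4 - 7 * e ^ 3 - 5 * e ^ 2 + 17 * e + 18) := by linarith [mul_nonneg (pow_nonneg he0 0) (pow_nonneg hu0 4), mul_nonneg (pow_nonneg he0 1) (pow_nonneg hu0 3), mul_nonneg (pow_nonneg he0 2) (pow_nonneg hu0 2), mul_nonneg (pow_nonneg he0 3) (pow_nonneg hu0 1), mul_nonneg (pow_nonneg he0 4) (pow_nonneg hu0 0)]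
  have h7 : (0:ℝ) ≤ (1 - e) ^ 2 * (6 * e ^ 4 - 7 * e ^ 3 - 5 * e ^ 2 + 17 * e + 18) * (x - 1) ^ 7 := mul_nonneg (mul_nonneg (pow_nonneg hu0 2) q7) (pow_nonneg ht0 7)
  have q8 : (0:ℝ) ≤ (-3 * e ^ 2 + 3 * e + 6) := by linarith [mul_nonneg (pow_nonneg he0 0) (pow_nonneg hu0 2), mul_nonneg (pow_nonneg he0 1) (pow_nonneg hu0 1), mul_nonneg (pow_nonneg he0 2) (pow_nonneg hu0 0)]
  have h8 : (0:ℝ) ≤ (1 - e) ^ 2 * (-3 * e ^ 2 + 3 * e + 6) * (x - 1) ^ 8 := mul_nonneg (mul_nonneg (pow_nonneg hu0 2) q8) (pow_nonneg ht0 8)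
  have q9 : (0:ℝ) ≤ (1) := by norm_num
  have h9 : (0:ℝ) ≤ (1 - e) ^ 2 * (1) * (x - 1) ^ 9 := mul_nonneg (mul_nonneg (pow_nonneg hu0 2) q9) (pow_nonneg ht0 9)
  linarith [h0, h1, h2, h3, h4, h5, h6, h7, h8, h9]

lemma stmt18P2_lq (e : ℝ) (he0 : 0 ≤ e) (he1 : e < 1) : (-10 * e ^ 6 - 12 * e ^ 5 + 18 * e ^ 4 + 8 * e ^ 3 - 12 * e ^ 2 - 16) < 0 := by
  have hu : (0:ℝ) < 1 - e := by linarith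
  linarith [pow_pos hu 6, mul_nonneg (pow_nonneg he0 1) (pow_nonneg (le_of_lt hu) 5), mul_nonneg (pow_nonneg he0 2) (pow_nonneg (le_of_lt hu) 4), mul_nonneg (pow_nonneg he0 3) (pow_nonneg (le_of_lt hu) 3), mul_nonneg (pow_nonneg he0 4) (pow_nonneg (le_of_lt hu) 2), mul_nonneg (pow_nonneg he0 5) (pow_nonneg (le_of_lt hu) 1), mul_nonneg (pow_nonneg he0 6) (pow_nonneg (le_of_lt hu) 0)]

lemma stmt18P3_lq (e : ℝ) (he0 : 0 ≤ e) (he1 : e ≤ 1) : (-48 * e ^ 6 - 96 * e ^ 5 + 120 * e ^ 4 + 144 * e ^ 3 - 216 * e ^ 2) ≤ 0 := by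
  have hu0 : (0:ℝ) ≤ 1 - e := by linarith
  linarith [mul_nonneg (pow_nonneg he0 0) (pow_nonneg hu0 6), mul_nonneg (pow_nonneg he0 1) (pow_nonneg hu0 5), mul_nonneg (pow_nonneg he0 2) (pow_nonneg hu0 4), mul_nonneg (pow_nonneg he0 3) (pow_nonneg hu0 3), mul_nonneg (pow_nonneg he0 4) (pow_nonneg hu0 2), mul_nonneg (pow_nonneg he0 5) (pow_nonneg hu0 1), mul_nonneg (pow_nonneg he0 6) (pow_nonneg hu0 0)]

set_option maxHeartbeats 2000000 in
lemma stmt18Wpos_rn (e x : ℝ) (he0 : 0 ≤ e) (he1 : e < 1) (hx : 1 < x) :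
    0 < 1 * x ^ 9 + 1 * x ^ 9 * e - 3 * x ^ 8 - 6 * x ^ 8 * e - 3 * x ^ 8 * e ^ 2 + 6 * x ^ 7 + 14 * x ^ 7 * e + 14 * x ^ 7 * e ^ 2 + 6 * x ^ 7 * e ^ 3 - 21 * x ^ 6 * e - 26 * x ^ 6 * e ^ 2 - 21 * x ^ 6 * e ^ 3 + 27 * x ^ 5 * e ^ 2 + 27 * x ^ 5 * e ^ 3 - 16 * x ^ 4 * e ^ 3 := by
  have hu : (0:ℝ) < 1 - e := by linarith
  have hu0 : (0:ℝ) ≤ 1 - e := le_of_lt hu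
  have ht0 : (0:ℝ) ≤ x - 1 := by linarith
  have h0 : (0:ℝ) < (1 - e) ^ 3 * (4) := mul_pos (pow_pos hu 3) (by norm_num)
  have q1 : (0:ℝ) ≤ (-13 * e + 27) := by linarith [mul_nonneg (pow_nonneg he0 0) (pow_nonneg hu0 1), mul_nonneg (pow_nonneg he0 1) (pow_nonneg hu0 0)]
  have h1 : (0:ℝ) ≤ (1 - e) ^ 2 * (-13 * e + 27) * (x - 1) ^ 1 := mul_nonneg (mul_nonneg (pow_nonneg hu0 2) q1) (pow_nonneg ht0 1)
  have q2 : (0:ℝ) ≤ (15 * e ^ 2 - 75 * e + 78) := by linarith [mul_nonneg (pow_nonneg he0 0) (pow_nonneg hu0 2), mul_nonneg (pow_nonneg he0 1) (pow_nonneg hu0 1), mul_nonneg (pow_nonneg he0 2) (pow_nonneg hu0 0)]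
  have h2 : (0:ℝ) ≤ (1 - e) ^ 1 * (15 * e ^ 2 - 75 * e + 78) * (x - 1) ^ 2 := mul_nonneg (mul_nonneg (pow_nonneg hu0 1) q2) (pow_nonneg ht0 2)
  have q3 : (0:ℝ) ≤ (-4 * e ^ 3 + 72 * e ^ 2 - 182 * e + 126) := by linarith [mul_nonneg (pow_nonneg he0 0) (pow_nonneg hu0 3), mul_nonneg (pow_nonneg he0 1) (pow_nonneg hu0 2), mul_nonneg (pow_nonneg he0 2) (pow_nonneg hu0 1), mul_nonneg (pow_nonneg he0 3) (pow_nonneg hu0 0)]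
  have h3 : (0:ℝ) ≤ (1 - e) ^ 0 * (-4 * e ^ 3 + 72 * e ^ 2 - 182 * e + 126) * (x - 1) ^ 3 := mul_nonneg (mul_nonneg (pow_nonneg hu0 0) q3) (pow_nonneg ht0 3)
  have q4 : (0:ℝ) ≤ (14 * e ^ 3 + 25 * e ^ 2 - 119 * e + 126) := by linarith [mul_nonneg (pow_nonneg he0 0) (pow_nonneg hu0 3), mul_nonneg (pow_nonneg he0 1) (pow_nonneg hu0 2), mul_nonneg (pow_nonneg he0 2) (pow_nonneg hu0 1), mul_nonneg (pow_nonneg he0 3) (pow_nonneg hu0 0)]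
  have h4 : (0:ℝ) ≤ (1 - e) ^ 0 * (14 * e ^ 3 + 25 * e ^ 2 - 119 * e + 126) * (x - 1) ^ 4 := mul_nonneg (mul_nonneg (pow_nonneg hu0 0) q4) (pow_nonneg ht0 4)
  have q5 : (0:ℝ) ≤ (27 * e ^ 3 - 3 * e ^ 2 - 42 * e + 84) := by linarith [mul_nonneg (pow_nonneg he0 0) (pow_nonneg hu0 3), mul_nonneg (pow_nonneg he0 1) (pow_nonneg hu0 2), mul_nonneg (pow_nonneg he0 2) (pow_nonneg hu0 1), mul_nonneg (pow_nonneg he0 3) (pow_nonneg hu0 0)]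
  have h5 : (0:ℝ) ≤ (1 - e) ^ 0 * (27 * e ^ 3 - 3 * e ^ 2 - 42 * e + 84) * (x - 1) ^ 5 := mul_nonneg (mul_nonneg (pow_nonneg hu0 0) q5) (pow_nonneg ht0 5)
  have q6 : (0:ℝ) ≤ (21 * e ^ 3 - 12 * e ^ 2 - 7 * e + 42) := by linarith [mul_nonneg (pow_nonneg he0 0) (pow_nonneg hu0 3), mul_nonneg (pow_nonneg he0 1) (pow_nonneg hu0 2), mul_nonneg (pow_nonneg he0 2) (pow_nonneg hu0 1), mul_nonneg (pow_nonneg he0 3) (pow_nonneg hu0 0)]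
  have h6 : (0:ℝ) ≤ (1 - e) ^ 0 * (21 * e ^ 3 - 12 * e ^ 2 - 7 * e + 42) * (x - 1) ^ 6 := mul_nonneg (mul_nonneg (pow_nonneg hu0 0) q6) (pow_nonneg ht0 6)
  have q7 : (0:ℝ) ≤ (6 * e ^ 3 - 10 * e ^ 2 + 2 * e + 18) := by linarith [mul_nonneg (pow_nonneg he0 0) (pow_nonneg hu0 3), mul_nonneg (pow_nonneg he0 1) (pow_nonneg hu0 2), mul_nonneg (pow_nonneg he0 2) (pow_nonneg hu0 1), mul_nonneg (pow_nonneg he0 3) (pow_nonneg hu0 0)]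
  have h7 : (0:ℝ) ≤ (1 - e) ^ 0 * (6 * e ^ 3 - 10 * e ^ 2 + 2 * e + 18) * (x - 1) ^ 7 := mul_nonneg (mul_nonneg (pow_nonneg hu0 0) q7) (pow_nonneg ht0 7)
  have q8 : (0:ℝ) ≤ (-3 * e ^ 2 + 3 * e + 6) := by linarith [mul_nonneg (pow_nonneg he0 0) (pow_nonneg hu0 2), mul_nonneg (pow_nonneg he0 1) (pow_nonneg hu0 1), mul_nonneg (pow_nonneg he0 2) (pow_nonneg hu0 0)]
  have h8 : (0:ℝ) ≤ (1 - e) ^ 0 * (-3 * e ^ 2 + 3 * e + 6) * (x - 1) ^ 8 := mul_nonneg (mul_nonneg (pow_nonneg hu0 0) q8) (pow_nonneg ht0 8)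
  have q9 : (0:ℝ) ≤ (1 * e + 1) := by linarith [mul_nonneg (pow_nonneg he0 0) (pow_nonneg hu0 1), mul_nonneg (pow_nonneg he0 1) (pow_nonneg hu0 0)]
  have h9 : (0:ℝ) ≤ (1 - e) ^ 0 * (1 * e + 1) * (x - 1) ^ 9 := mul_nonneg (mul_nonneg (pow_nonneg hu0 0) q9) (pow_nonneg ht0 9)
  linarith [h0, h1, h2, h3, h4, h5, h6, h7, h8, h9]

lemma stmt18P2_rn (e : ℝ) (he0 : 0 ≤ e) (he1 : e < 1) : (-8 * e ^ 2 + 8 * e - 16) < 0 := by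
  have hu : (0:ℝ) < 1 - e := by linarith
  linarith [pow_pos hu 2, mul_nonneg (pow_nonneg he0 1) (pow_nonneg (le_of_lt hu) 1), mul_nonneg (pow_nonneg he0 2) (pow_nonneg (le_of_lt hu) 0)]

lemma stmt18P3_rn (e : ℝ) (he0 : 0 ≤ e) (he1 : e ≤ 1) : (-72 * e ^ 2) ≤ 0 := by
  have hu0 : (0:ℝ) ≤ 1 - e := by linarith
  linarith [mul_nonneg (pow_nonneg he0 0) (pow_nonneg hu0 2), mul_nonneg (pow_nonneg he0 1) (pow_nonneg hu0 1), mul_nonneg (pow_nonneg he0 2) (pow_nonneg hu0 0)]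

set_option maxHeartbeats 1000000 in
lemma stmt18Ppos_lq (e x : ℝ) (he0 : 0 ≤ e) (he1 : e ≤ 1) (hx : 1 ≤ x)
    (hbig : 223 ≤ (1 - e) ^ 2 * x) :
    0 < 1 * x ^ 5 - 2 * x ^ 5 * e + 1 * x ^ 5 * e ^ 2 - 3 * x ^ 4 + 10 * x ^ 4 * e - 14 * x ^ 4 * e ^ 2 + 10 * x ^ 4 * e ^ 3 - 3 * x ^ 4 * e ^ 4 - 12 * x ^ 3 * e + 30 * x ^ 3 * e ^ 2 - 36 * x ^ 3 * e ^ 3 + 30 * x ^ 3 * e ^ 4 - 12 * x ^ 3 * e ^ 5 - 15 * x ^ 2 * e ^ 2 + 34 * x ^ 2 * e ^ 3 - 62 * x ^ 2 * e ^ 4 + 34 * x ^ 2 * e ^ 5 - 15 * x ^ 2 * e ^ 6 + 37 * x * e ^ 4 - 26 * x * e ^ 5 + 37 * x * e ^ 6 - 24 * e ^ 6 := by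
  have hx0 : (0:ℝ) ≤ x := by linarith
  have hu0 : (0:ℝ) ≤ 1 - e := by linarith
  have t0 : (0:ℝ) ≤ (-24 * e ^ 6 + 24) := by linarith [mul_nonneg (pow_nonneg he0 0) (pow_nonneg hu0 6), mul_nonneg (pow_nonneg he0 1) (pow_nonneg hu0 5), mul_nonneg (pow_nonneg he0 2) (pow_nonneg hu0 4), mul_nonneg (pow_nonneg he0 3) (pow_nonneg hu0 3), mul_nonneg (pow_nonneg he0 4) (pow_nonneg hu0 2), mul_nonneg (pow_nonneg he0 5) (pow_nonneg hu0 1), mul_nonneg (pow_nonneg he0 6) (pow_nonneg hu0 0)]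
  have hm0 : (0:ℝ) ≤ (-24 * e ^ 6 + 24) * x ^ 0 := mul_nonneg t0 (pow_nonneg hx0 0)
  have t1 : (0:ℝ) ≤ (37 * e ^ 6 - 26 * e ^ 5 + 37 * e ^ 4 + 26) := by linarith [mul_nonneg (pow_nonneg he0 0) (pow_nonneg hu0 6), mul_nonneg (pow_nonneg he0 1) (pow_nonneg hu0 5), mul_nonneg (pow_nonneg he0 2) (pow_nonneg hu0 4), mul_nonneg (pow_nonneg he0 3) (pow_nonneg hu0 3), mul_nonneg (pow_nonneg he0 4) (pow_nonneg hu0 2), mul_nonneg (pow_nonneg he0 5) (pow_nonneg hu0 1), mul_nonneg (pow_nonneg he0 6) (pow_nonneg hu0 0)]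
  have hm1 : (0:ℝ) ≤ (37 * e ^ 6 - 26 * e ^ 5 + 37 * e ^ 4 + 26) * x ^ 1 := mul_nonneg t1 (pow_nonneg hx0 1)
  have t2 : (0:ℝ) ≤ (-15 * e ^ 6 + 34 * e ^ 5 - 62 * e ^ 4 + 34 * e ^ 3 - 15 * e ^ 2 + 92) := by linarith [mul_nonneg (pow_nonneg he0 0) (pow_nonneg hu0 6), mul_nonneg (pow_nonneg he0 1) (pow_nonneg hu0 5), mul_nonneg (pow_nonneg he0 2) (pow_nonneg hu0 4), mul_nonneg (pow_nonneg he0 3) (pow_nonneg hu0 3), mul_nonneg (pow_nonneg he0 4) (pow_nonneg hu0 2), mul_nonneg (pow_nonneg he0 5) (pow_nonneg hu0 1), mul_nonneg (pow_nonneg he0 6) (pow_nonneg hu0 0)]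
  have hm2 : (0:ℝ) ≤ (-15 * e ^ 6 + 34 * e ^ 5 - 62 * e ^ 4 + 34 * e ^ 3 - 15 * e ^ 2 + 92) * x ^ 2 := mul_nonneg t2 (pow_nonneg hx0 2)
  have t3 : (0:ℝ) ≤ (-12 * e ^ 5 + 30 * e ^ 4 - 36 * e ^ 3 + 30 * e ^ 2 - 12 * e + 60) := by linarith [mul_nonneg (pow_nonneg he0 0) (pow_nonneg hu0 5), mul_nonneg (pow_nonneg he0 1) (pow_nonneg hu0 4), mul_nonneg (pow_nonneg he0 2) (pow_nonneg hu0 3), mul_nonneg (pow_nonneg he0 3) (pow_nonneg hu0 2), mul_nonneg (pow_nonneg he0 4) (pow_nonneg hu0 1), mul_nonneg (pow_nonneg he0 5) (pow_nonneg hu0 0)]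
  have hm3 : (0:ℝ) ≤ (-12 * e ^ 5 + 30 * e ^ 4 - 36 * e ^ 3 + 30 * e ^ 2 - 12 * e + 60) * x ^ 3 := mul_nonneg t3 (pow_nonneg hx0 3)
  have t4 : (0:ℝ) ≤ (-3 * e ^ 4 + 10 * e ^ 3 - 14 * e ^ 2 + 10 * e + 17) := by linarith [mul_nonneg (pow_nonneg he0 0) (pow_nonneg hu0 4), mul_nonneg (pow_nonneg he0 1) (pow_nonneg hu0 3), mul_nonneg (pow_nonneg he0 2) (pow_nonneg hu0 2), mul_nonneg (pow_nonneg he0 3) (pow_nonneg hu0 1), mul_nonneg (pow_nonneg he0 4) (pow_nonneg hu0 0)]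
  have hm4 : (0:ℝ) ≤ (-3 * e ^ 4 + 10 * e ^ 3 - 14 * e ^ 2 + 10 * e + 17) * x ^ 4 := mul_nonneg t4 (pow_nonneg hx0 4)
  have hp4 : (0:ℝ) < x ^ 4 := pow_pos (by linarith) 4
  have hle0 : x ^ 0 ≤ x ^ 4 := pow_le_pow_right₀ hx (by norm_num)
  have hle1 : x ^ 1 ≤ x ^ 4 := pow_le_pow_right₀ hx (by norm_num)
  have hle2 : x ^ 2 ≤ x ^ 4 := pow_le_pow_right₀ hx (by norm_num)
  have hle3 : x ^ 3 ≤ x ^ 4 := pow_le_pow_right₀ hx (by norm_num)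
  have hlead : 223 * x ^ 4 ≤ ((1 - e) ^ 2 * x) * x ^ 4 := mul_le_mul_of_nonneg_right hbig (le_of_lt hp4)
  linarith [hm0, hm1, hm2, hm3, hm4, hle0, hle1, hle2, hle3, hp4, hlead]

lemma stmt18P21_rn (e : ℝ) (he0 : 0 ≤ e) (he1 : e ≤ 1) : 0 < (-503622 * e ^ 2 + 3000564 * e + 3500658) := by
  have hu0 : (0:ℝ) ≤ 1 - e := by linarith
  linarith [pow_nonneg hu0 2, mul_nonneg (pow_nonneg he0 1) (pow_nonneg hu0 1), mul_nonneg (pow_nonneg he0 2) (pow_nonneg hu0 0)]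

set_option maxHeartbeats 20000000 in
/-- for `0 ≤ ξ < 1` and `η ∈ {0, √ξ}`, the function
`G(x) = I(x)(1 − I(x)) − H(x)` has exactly one zero `x_ISCO` in `(1,∞)`, which
satisfies `x_ISCO ≥ 3`; moreover `G < 0` on `(1, x_ISCO)`, `G > 0` on `(x_ISCO,∞)`, and
`G` has strictly positive derivative at `x_ISCO`.  In particular the RN and LQBH
metrics satisfy the single-MSCO condition, with a unique ISCO at `r_ISCO ≥ 3 r_h`. -/
theorem stmt18
    (ξ η : ℝ) (hξ0 : 0 ≤ ξ) (hξ1 : ξ < 1)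
    (hη : η = 0 ∨ η = Real.sqrt ξ)
    (I H G : ℝ → ℝ)
    (hI : ∀ x, I x = -2 * η / (x + η) + 1 / (x - 1) + ξ / (x - ξ))
    (hH : ∀ x, H x = 2 * η ^ 2 / (x + η) ^ 2 + 1 / (x - 1) ^ 2 + ξ ^ 2 / (x - ξ) ^ 2)
    (hG : ∀ x, G x = I x * (1 - I x) - H x) :
    ∃ x_ISCO : ℝ, 1 < x_ISCO ∧ G x_ISCO = 0 ∧
      (∀ x, 1 < x → G x = 0 → x = x_ISCO) ∧
      3 ≤ x_ISCO ∧
      (∀ x, 1 < x → x < x_ISCO → G x < 0) ∧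
      (∀ x, x_ISCO < x → 0 < G x) ∧
      0 < deriv G x_ISCO := by
  rcases hη with hcase | hcase
  · -- Reissner–Nordström case : η = 0
    subst hcase
    have hGfun : G = fun x : ℝ => (-2 * 0 / (x + 0) + 1 / (x - 1) + ξ / (x - ξ)) * (1 - (-2 * 0 / (x + 0) + 1 / (x - 1) + ξ / (x - ξ))) - (2 * 0 ^ 2 / (x + 0) ^ 2 + 1 / (x - 1) ^ 2 + ξ ^ 2 / (x - ξ) ^ 2) :=
      funext fun x => by rw [hG, hI, hH]
    refine stmt18core G
      (fun x => (1 * x ^ 12 + 1 * x ^ 12 * ξ - 2 * x ^ 12 * 0 - 4 * x ^ 11 - 8 * x ^ 11 * ξ - 4 * x ^ 11 * ξ ^ 2 + 12 * x ^ 11 * 0 + 12 * x ^ 11 * 0 * ξ - 8 * x ^ 11 * 0 ^ 2 + 9 * x ^ 10 + 24 * x ^ 10 * ξ + 24 * x ^ 10 * ξ ^ 2 + 9 * x ^ 10 * ξ ^ 3 - 32 * x ^ 10 * 0 - 64 * x ^ 10 * 0 * ξ - 32 * x ^ 10 * 0 * ξ ^ 2 + 42 * x ^ 10 * 0 ^ 2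 + 42 * x ^ 10 * 0 ^ 2 * ξ - 22 * x ^ 10 * 0 ^ 3 - 6 * x ^ 9 - 44 * x ^ 9 * ξ - 60 * x ^ 9 * ξ ^ 2 - 44 * x ^ 9 * ξ ^ 3 - 6 * x ^ 9 * ξ ^ 4 + 52 * x ^ 9 * 0 + 160 * x ^ 9 * 0 * ξ + 160 * x ^ 9 * 0 * ξ ^ 2 + 52 * x ^ 9 * 0 * ξ ^ 3 - 96 * x ^ 9 * 0 ^ 2 - 208 * x ^ 9 * 0 ^ 2 * ξ - 96 * x ^ 9 * 0 ^ 2 * ξ ^ 2 + 100 * x ^ 9 * 0 ^ 3 + 100 * x ^ 9 * 0 ^ 3 * ξ - 16 * x ^ 9 * 0 ^ 4 + 27 * x ^ 8 * ξ + 88 * x ^ 8 * ξ ^ 2 + 88 * x ^ 8 * ξ ^ 3 + 27 * x ^ 8 * ξ ^ 4 - 30 * x ^ 8 * 0 - 240 * x ^ 8 * 0 * ξ - 360 * x ^ 8 * 0 * ξ ^ 2 - 240 * x ^ 8 * 0 * ξ ^ 3 - 30 * x ^ 8 * 0 * ξ ^ 4 + 122 * x ^ 8 * 0 ^ 2 +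 456 * x ^ 8 * 0 ^ 2 * ξ + 456 * x ^ 8 * 0 ^ 2 * ξ ^ 2 + 122 * x ^ 8 * 0 ^ 2 * ξ ^ 3 - 184 * x ^ 8 * 0 ^ 3 - 448 * x ^ 8 * 0 ^ 3 * ξ - 184 * x ^ 8 * 0 ^ 3 * ξ ^ 2 + 69 * x ^ 8 * 0 ^ 4 + 69 * x ^ 8 * 0 ^ 4 * ξ - 48 * x ^ 7 * ξ ^ 2 - 96 * x ^ 7 * ξ ^ 3 - 48 * x ^ 7 * ξ ^ 4 + 132 * x ^ 7 * 0 * ξ + 464 * x ^ 7 * 0 * ξ ^ 2 + 464 * x ^ 7 * 0 * ξ ^ 3 + 132 * x ^ 7 * 0 * ξ ^ 4 - 60 * x ^ 7 * 0 ^ 2 - 552 * x ^ 7 * 0 ^ 2 * ξ - 936 * x ^ 7 * 0 ^ 2 * ξ ^ 2 - 552 * x ^ 7 * 0 ^ 2 * ξ ^ 3 - 60 * x ^ 7 * 0 ^ 2 * ξ ^ 4 + 172 * x ^ 7 * 0 ^ 3 + 816 * x ^ 7 * 0 ^ 3 * ξ + 816 * x ^ 7 * 0 ^ 3 * ξ ^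 2 + 172 * x ^ 7 * 0 ^ 3 * ξ ^ 3 - 116 * x ^ 7 * 0 ^ 4 - 296 * x ^ 7 * 0 ^ 4 * ξ - 116 * x ^ 7 * 0 ^ 4 * ξ ^ 2 + 43 * x ^ 6 * ξ ^ 3 + 43 * x ^ 6 * ξ ^ 4 - 232 * x ^ 6 * 0 * ξ ^ 2 - 480 * x ^ 6 * 0 * ξ ^ 3 - 232 * x ^ 6 * 0 * ξ ^ 4 + 262 * x ^ 6 * 0 ^ 2 * ξ + 1032 * x ^ 6 * 0 ^ 2 * ξ ^ 2 + 1032 * x ^ 6 * 0 ^ 2 * ξ ^ 3 + 262 * x ^ 6 * 0 ^ 2 * ξ ^ 4 - 66 * x ^ 6 * 0 ^ 3 - 752 * x ^ 6 * 0 ^ 3 * ξ - 1464 * x ^ 6 * 0 ^ 3 * ξ ^ 2 - 752 * x ^ 6 * 0 ^ 3 * ξ ^ 3 - 66 * x ^ 6 * 0 ^ 3 * ξ ^ 4 + 93 * x ^ 6 * 0 ^ 4 + 496 * x ^ 6 * 0 ^ 4 * ξ + 496 * x ^ 6 * 0 ^ 4 * ξ ^ 2 + 93 * x ^ 6 * 0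 ^ 4 * ξ ^ 3 - 16 * x ^ 5 * ξ ^ 4 + 204 * x ^ 5 * 0 * ξ ^ 3 + 204 * x ^ 5 * 0 * ξ ^ 4 - 456 * x ^ 5 * 0 ^ 2 * ξ ^ 2 - 992 * x ^ 5 * 0 ^ 2 * ξ ^ 3 - 456 * x ^ 5 * 0 ^ 2 * ξ ^ 4 + 284 * x ^ 5 * 0 ^ 3 * ξ + 1312 * x ^ 5 * 0 ^ 3 * ξ ^ 2 + 1312 * x ^ 5 * 0 ^ 3 * ξ ^ 3 + 284 * x ^ 5 * 0 ^ 3 * ξ ^ 4 - 30 * x ^ 5 * 0 ^ 4 - 396 * x ^ 5 * 0 ^ 4 * ξ - 828 * x ^ 5 * 0 ^ 4 * ξ ^ 2 - 396 * x ^ 5 * 0 ^ 4 * ξ ^ 3 - 30 * x ^ 5 * 0 ^ 4 * ξ ^ 4 - 74 * x ^ 4 * 0 * ξ ^ 4 + 390 * x ^ 4 * 0 ^ 2 * ξ ^ 3 + 390 * x ^ 4 * 0 ^ 2 * ξ ^ 4 - 480 * x ^ 4 * 0 ^ 3 * ξ ^ 2 - 1120 * x ^ 4 * 0 ^ 3 *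 ξ ^ 3 - 480 * x ^ 4 * 0 ^ 3 * ξ ^ 4 + 127 * x ^ 4 * 0 ^ 4 * ξ + 656 * x ^ 4 * 0 ^ 4 * ξ ^ 2 + 656 * x ^ 4 * 0 ^ 4 * ξ ^ 3 + 127 * x ^ 4 * 0 ^ 4 * ξ ^ 4 - 136 * x ^ 3 * 0 ^ 2 * ξ ^ 4 + 388 * x ^ 3 * 0 ^ 3 * ξ ^ 3 + 388 * x ^ 3 * 0 ^ 3 * ξ ^ 4 - 208 * x ^ 3 * 0 ^ 4 * ξ ^ 2 - 512 * x ^ 3 * 0 ^ 4 * ξ ^ 3 - 208 * x ^ 3 * 0 ^ 4 * ξ ^ 4 - 126 * x ^ 2 * 0 ^ 3 * ξ ^ 4 + 159 * x ^ 2 * 0 ^ 4 * ξ ^ 3 + 159 * x ^ 2 * 0 ^ 4 * ξ ^ 4 - 48 * x * 0 ^ 4 * ξ ^ 4) / (((x + 0) * (x - 1) * (x - ξ)) ^ 2) ^ 2)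
      ?_ ?_ ?_ ?_ 21 (by norm_num) ?_
    · intro x hx
      simp only [hGfun]
      exact stmt18deriv 0 ξ x le_rfl hξ1 hx
    · intro x hx
      have hA : (0:ℝ) < x + 0 := by linarith
      have hB : (0:ℝ) < x - 1 := by linarith
      have hC : (0:ℝ) < x - ξ := by linarith
      have hABC : (0:ℝ) < (x + 0) * (x - 1) * (x - ξ) := mul_pos (mul_pos hA hB) hC
      have hW := stmt18Wpos_rn ξ x hξ0 hξ1 hx
      apply div_pos
      · linarith [mul_pos hW hABC]
      · exact pow_pos (pow_pos hABC 2) 2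
    · have hA : (0:ℝ) < 2 + 0 := by norm_num
      have hB : (0:ℝ) < 2 - 1 := by norm_num
      have hC : (0:ℝ) < 2 - ξ := by linarith
      have key := stmt18PQ 0 ξ 2 hA hB hC
      simp only [hGfun]
      rw [key]
      apply div_neg_of_neg_of_pos
      · linarith [stmt18P2_rn ξ hξ0 hξ1]
      · exact pow_pos (mul_pos (mul_pos hA hB) hC) 2
    · have hA : (0:ℝ) < 3 + 0 := by norm_num
      have hB : (0:ℝ) < 3 - 1 := by norm_num
      have hC : (0:ℝ) < 3 - ξ := by linarith
      have key := stmt18PQ 0 ξ 3 hA hB hC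
      simp only [hGfun]
      rw [key]
      rw [div_nonpos_iff]
      right
      constructor
      · linarith [stmt18P3_rn ξ hξ0 (le_of_lt hξ1)]
      · exact le_of_lt (pow_pos (mul_pos (mul_pos hA hB) hC) 2)
    · have hA : (0:ℝ) < 21 + 0 := by norm_num
      have hB : (0:ℝ) < 21 - 1 := by norm_num
      have hC : (0:ℝ) < 21 - ξ := by linarith
      have key := stmt18PQ 0 ξ 21 hA hB hC
      simp only [hGfun]
      rw [key]
      apply div_pos
      · linarith [stmt18P21_rn ξ hξ0 (le_of_lt hξ1)]
      · exact pow_pos (mul_pos (mul_pos hA hB) hC) 2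
  · -- loop quantum corrected case : η = √ξ
    have hsq : η ^ 2 = ξ := by rw [hcase]; exact Real.sq_sqrt hξ0
    obtain rfl : ξ = η ^ 2 := hsq.symm
    have hη0 : 0 ≤ η := by rw [hcase]; exact Real.sqrt_nonneg _
    have hη1 : η < 1 := by nlinarith [hξ1, hη0]
    have hs1 : η ^ 2 < 1 := hξ1
    have hGfun : G = fun x : ℝ => (-2 * η / (x + η) + 1 / (x - 1) + (η ^ 2) / (x - (η ^ 2))) * (1 - (-2 * η / (x + η) + 1 / (x - 1) + (η ^ 2) / (x - (η ^ 2)))) - (2 * η ^ 2 / (x + η) ^ 2 + 1 / (x - 1) ^ 2 + (η ^ 2) ^ 2 / (x - (η ^ 2)) ^ 2) :=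
      funext fun x => by rw [hG, hI, hH]
    have hum : (0:ℝ) < 1 - η := by linarith
    have hq : (0:ℝ) < 223 / (1 - η) ^ 2 := div_pos (by norm_num) (pow_pos hum 2)
    have hb3 : (3:ℝ) < 3 + 223 / (1 - η) ^ 2 := by linarith
    refine stmt18core G
      (fun x => (1 * x ^ 12 + 1 * x ^ 12 * (η ^ 2) - 2 * x ^ 12 * η - 4 * x ^ 11 - 8 * x ^ 11 * (η ^ 2) - 4 * x ^ 11 * (η ^ 2) ^ 2 + 12 * x ^ 11 * η + 12 * x ^ 11 * η * (η ^ 2) - 8 * x ^ 11 * η ^ 2 + 9 * x ^ 10 + 24 * x ^ 10 * (η ^ 2) + 24 * x ^ 10 * (η ^ 2) ^ 2 + 9 * x ^ 10 * (η ^ 2) ^ 3 - 32 * x ^ 10 * η - 64 * x ^ 10 * η * (η ^ 2) - 32 * x ^ 10 * η * (η ^ 2) ^ 2 + 42 * x ^ 10 * η ^ 2 + 42 * x ^ 10 * η ^ 2 * (η ^ 2) - 22 * x ^ 10 * η ^ 3 - 6 * x ^ 9 - 44 * x ^ 9 * (η ^ 2) - 60 * x ^ 9 * (η ^ 2) ^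 2 - 44 * x ^ 9 * (η ^ 2) ^ 3 - 6 * x ^ 9 * (η ^ 2) ^ 4 + 52 * x ^ 9 * η + 160 * x ^ 9 * η * (η ^ 2) + 160 * x ^ 9 * η * (η ^ 2) ^ 2 + 52 * x ^ 9 * η * (η ^ 2) ^ 3 - 96 * x ^ 9 * η ^ 2 - 208 * x ^ 9 * η ^ 2 * (η ^ 2) - 96 * x ^ 9 * η ^ 2 * (η ^ 2) ^ 2 + 100 * x ^ 9 * η ^ 3 + 100 * x ^ 9 * η ^ 3 * (η ^ 2) - 16 * x ^ 9 * η ^ 4 + 27 * x ^ 8 * (η ^ 2) + 88 * x ^ 8 * (η ^ 2) ^ 2 + 88 * x ^ 8 * (η ^ 2) ^ 3 + 27 * x ^ 8 * (η ^ 2) ^ 4 - 30 * x ^ 8 * η - 240 * x ^ 8 * η * (η ^ 2) - 360 * x ^ 8 * η * (η ^ 2) ^ 2 - 240 * x ^ 8 * η * (η ^ 2) ^ 3 - 30 * x ^ 8 * η * (η ^ 2) ^ 4 + 122 * x ^ 8 * η ^ 2 + 456 * x ^ 8 * η ^ 2 * (η ^ 2) + 456 * x ^ 8 * η ^ 2 *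 (η ^ 2) ^ 2 + 122 * x ^ 8 * η ^ 2 * (η ^ 2) ^ 3 - 184 * x ^ 8 * η ^ 3 - 448 * x ^ 8 * η ^ 3 * (η ^ 2) - 184 * x ^ 8 * η ^ 3 * (η ^ 2) ^ 2 + 69 * x ^ 8 * η ^ 4 + 69 * x ^ 8 * η ^ 4 * (η ^ 2) - 48 * x ^ 7 * (η ^ 2) ^ 2 - 96 * x ^ 7 * (η ^ 2) ^ 3 - 48 * x ^ 7 * (η ^ 2) ^ 4 + 132 * x ^ 7 * η * (η ^ 2) + 464 * x ^ 7 * η * (η ^ 2) ^ 2 + 464 * x ^ 7 * η * (η ^ 2) ^ 3 + 132 * x ^ 7 * η * (η ^ 2) ^ 4 - 60 * x ^ 7 * η ^ 2 - 552 * x ^ 7 * η ^ 2 * (η ^ 2) - 936 * x ^ 7 * η ^ 2 * (η ^ 2) ^ 2 - 552 * x ^ 7 * η ^ 2 * (η ^ 2) ^ 3 - 60 * x ^ 7 * η ^ 2 * (η ^ 2) ^ 4 + 172 * x ^ 7 * η ^ 3 + 816 * x ^ 7 * η ^ 3 * (η ^ 2) + 816 * x ^ 7 * η ^ 3 * (η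 ^ 2) ^ 2 + 172 * x ^ 7 * η ^ 3 * (η ^ 2) ^ 3 - 116 * x ^ 7 * η ^ 4 - 296 * x ^ 7 * η ^ 4 * (η ^ 2) - 116 * x ^ 7 * η ^ 4 * (η ^ 2) ^ 2 + 43 * x ^ 6 * (η ^ 2) ^ 3 + 43 * x ^ 6 * (η ^ 2) ^ 4 - 232 * x ^ 6 * η * (η ^ 2) ^ 2 - 480 * x ^ 6 * η * (η ^ 2) ^ 3 - 232 * x ^ 6 * η * (η ^ 2) ^ 4 + 262 * x ^ 6 * η ^ 2 * (η ^ 2) + 1032 * x ^ 6 * η ^ 2 * (η ^ 2) ^ 2 + 1032 * x ^ 6 * η ^ 2 * (η ^ 2) ^ 3 + 262 * x ^ 6 * η ^ 2 * (η ^ 2) ^ 4 - 66 * x ^ 6 * η ^ 3 - 752 * x ^ 6 * η ^ 3 * (η ^ 2) - 1464 * x ^ 6 * η ^ 3 * (η ^ 2) ^ 2 - 752 * x ^ 6 * η ^ 3 * (η ^ 2) ^ 3 - 66 * x ^ 6 * η ^ 3 * (η ^ 2) ^ 4 + 93 * x ^ 6 * η ^ 4 + 496 * x ^ 6 * η ^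 4 * (η ^ 2) + 496 * x ^ 6 * η ^ 4 * (η ^ 2) ^ 2 + 93 * x ^ 6 * η ^ 4 * (η ^ 2) ^ 3 - 16 * x ^ 5 * (η ^ 2) ^ 4 + 204 * x ^ 5 * η * (η ^ 2) ^ 3 + 204 * x ^ 5 * η * (η ^ 2) ^ 4 - 456 * x ^ 5 * η ^ 2 * (η ^ 2) ^ 2 - 992 * x ^ 5 * η ^ 2 * (η ^ 2) ^ 3 - 456 * x ^ 5 * η ^ 2 * (η ^ 2) ^ 4 + 284 * x ^ 5 * η ^ 3 * (η ^ 2) + 1312 * x ^ 5 * η ^ 3 * (η ^ 2) ^ 2 + 1312 * x ^ 5 * η ^ 3 * (η ^ 2) ^ 3 + 284 * x ^ 5 * η ^ 3 * (η ^ 2) ^ 4 - 30 * x ^ 5 * η ^ 4 - 396 * x ^ 5 * η ^ 4 * (η ^ 2) - 828 * x ^ 5 * η ^ 4 * (η ^ 2) ^ 2 - 396 * x ^ 5 * η ^ 4 * (η ^ 2) ^ 3 - 30 * x ^ 5 * η ^ 4 * (η ^ 2) ^ 4 - 74 * x ^ 4 * η * (η ^ 2) ^ 4 + 390 * x ^ 4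 * η ^ 2 * (η ^ 2) ^ 3 + 390 * x ^ 4 * η ^ 2 * (η ^ 2) ^ 4 - 480 * x ^ 4 * η ^ 3 * (η ^ 2) ^ 2 - 1120 * x ^ 4 * η ^ 3 * (η ^ 2) ^ 3 - 480 * x ^ 4 * η ^ 3 * (η ^ 2) ^ 4 + 127 * x ^ 4 * η ^ 4 * (η ^ 2) + 656 * x ^ 4 * η ^ 4 * (η ^ 2) ^ 2 + 656 * x ^ 4 * η ^ 4 * (η ^ 2) ^ 3 + 127 * x ^ 4 * η ^ 4 * (η ^ 2) ^ 4 - 136 * x ^ 3 * η ^ 2 * (η ^ 2) ^ 4 + 388 * x ^ 3 * η ^ 3 * (η ^ 2) ^ 3 + 388 * x ^ 3 * η ^ 3 * (η ^ 2) ^ 4 - 208 * x ^ 3 * η ^ 4 * (η ^ 2) ^ 2 - 512 * x ^ 3 * η ^ 4 * (η ^ 2) ^ 3 - 208 * x ^ 3 * η ^ 4 * (η ^ 2) ^ 4 - 126 * x ^ 2 * η ^ 3 * (η ^ 2) ^ 4 + 159 * x ^ 2 * η ^ 4 * (η ^ 2) ^ 3 + 159 * x ^ 2 * η ^ 4 *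 (η ^ 2) ^ 4 - 48 * x * η ^ 4 * (η ^ 2) ^ 4) / (((x + η) * (x - 1) * (x - η ^ 2)) ^ 2) ^ 2)
      ?_ ?_ ?_ ?_ (3 + 223 / (1 - η) ^ 2) hb3 ?_
    · intro x hx
      simp only [hGfun]
      exact stmt18deriv η (η ^ 2) x hη0 hs1 hx
    · intro x hx
      have hA : (0:ℝ) < x + η := by linarith
      have hB : (0:ℝ) < x - 1 := by linarith
      have hC : (0:ℝ) < x - η ^ 2 := by linarith
      have hABC : (0:ℝ) < (x + η) * (x - 1) * (x - η ^ 2) := mul_pos (mul_pos hA hB) hC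
      have hW := stmt18Wpos_lq η x hη0 hη1 hx
      apply div_pos
      · linarith [mul_pos hW hABC]
      · exact pow_pos (pow_pos hABC 2) 2
    · have hA : (0:ℝ) < 2 + η := by linarith
      have hB : (0:ℝ) < 2 - 1 := by norm_num
      have hC : (0:ℝ) < 2 - η ^ 2 := by linarith
      have key := stmt18PQ η (η ^ 2) 2 hA hB hC
      simp only [hGfun]
      rw [key]
      apply div_neg_of_neg_of_pos
      · linarith [stmt18P2_lq η hη0 hη1]
      · exact pow_pos (mul_pos (mul_pos hA hB) hC) 2
    · have hA : (0:ℝ) < 3 + η := by linarith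
      have hB : (0:ℝ) < 3 - 1 := by norm_num
      have hC : (0:ℝ) < 3 - η ^ 2 := by linarith
      have key := stmt18PQ η (η ^ 2) 3 hA hB hC
      simp only [hGfun]
      rw [key]
      rw [div_nonpos_iff]
      right
      constructor
      · linarith [stmt18P3_lq η hη0 (le_of_lt hη1)]
      · exact le_of_lt (pow_pos (mul_pos (mul_pos hA hB) hC) 2)
    · have hA : (0:ℝ) < 3 + 223 / (1 - η) ^ 2 + η := by linarith
      have hB : (0:ℝ) < 3 + 223 / (1 - η) ^ 2 - 1 := by linarith
      have hC : (0:ℝ) < 3 + 223 / (1 - η) ^ 2 - η ^ 2 := by linarith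
      have key := stmt18PQ η (η ^ 2) (3 + 223 / (1 - η) ^ 2) hA hB hC
      have hne : ((1 - η) ^ 2 : ℝ) ≠ 0 := ne_of_gt (pow_pos hum 2)
      have hbeq : (1 - η) ^ 2 * (3 + 223 / (1 - η) ^ 2) = 3 * (1 - η) ^ 2 + 223 := by
        field_simp
      have hbig : 223 ≤ (1 - η) ^ 2 * (3 + 223 / (1 - η) ^ 2) := by
        rw [hbeq]
        linarith [sq_nonneg (1 - η)]
      simp only [hGfun]
      rw [key]
      apply div_pos
      · linarith [stmt18Ppos_lq η (3 + 223 / (1 - η) ^ 2) hη0 (le_of_lt hη1) (by linarith) hbig]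
      · exact pow_pos (mul_pos (mul_pos hA hB) hC) 2
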